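/- If f : ℝ^p → ℝ is μ-strongly convex and β-smooth with μ < β, then the operator R(u) = u - (2/(β+μ))∇f(u) is ((β-μ)/(β+μ))-contractive, i.e., Lipschitz with constant (β-μ)/(β+μ) < 1. -/

import Mathlib

open RealInnerProductSpace Set

variable {E : Type*} [NormedAddCommGroup E] [InnerProductSpace ℝ E] [CompleteSpace E]



/-- derivative of `f` along a line, from gradients. -/
lemma my_line_deriv (f : E → ℝ) (f' : E → E) (hf : ∀ x, HasGradientAt f (f' x) x)
    (u w : E) (t : ℝ) :
    HasDerivAt (fun s : ℝ => f (u + s • w)) ⟪f' (u + t • w), w⟫ t := by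
  have hL : HasDerivAt (fun s : ℝ => u + s • w) w t := by
    simpa using ((hasDerivAt_id t).smul_const w).const_add u
  have hF := hasGradientAt_iff_hasFDerivAt.mp (hf (u + t • w))
  have := hF.comp_hasDerivAt t hL
  exact this

/-- convexity gives gradient inequality along a line. -/
lemma my_convex_line (g : E → ℝ) (hc : ConvexOn ℝ Set.univ g) (u v : E) (c : ℝ)
    (hd : HasDerivAt (fun s : ℝ => g (u + s • (v - u))) c 0) : c ≤ g v - g u := by
  have hφ : ConvexOn ℝ Set.univ (fun s : ℝ => g (u + s • (v - u))) := by
    have h := hc.comp_affineMap (AffineMap.lineMap u v)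
    simpa [Function.comp_def, AffineMap.lineMap_apply, add_comm, vsub_eq_sub,
      vadd_eq_add] using h
  have := hφ.le_slope_of_hasDerivAt (mem_univ (0:ℝ)) (mem_univ (1:ℝ)) one_pos hd
  simpa [slope] using this

lemma my_normsq_line (u w : E) (t : ℝ) :
    HasDerivAt (fun s : ℝ => ‖u + s • w‖ ^ 2)
      (2 * ⟪u, w⟫ + 2 * ‖w‖ ^ 2 * t) t := by
  have heq : (fun s : ℝ => ‖u + s • w‖ ^ 2)
      = fun s : ℝ => ‖u‖ ^ 2 + 2 * ⟪u, w⟫ * s + ‖w‖ ^ 2 * s ^ 2 := by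
    funext s
    rw [norm_add_sq_real, real_inner_smul_right, norm_smul]
    simp [mul_pow, sq_abs]
    ring
  rw [heq]
  have h1 : HasDerivAt (fun s : ℝ => ‖u‖ ^ 2 + 2 * ⟪u, w⟫ * s) (2 * ⟪u, w⟫) t :=
    (((hasDerivAt_id t).const_mul (2 * ⟪u, w⟫))).const_add (‖u‖ ^ 2) |>.congr_deriv (by ring)
  have h2 : HasDerivAt (fun s : ℝ => ‖w‖ ^ 2 * s ^ 2) (2 * ‖w‖ ^ 2 * t) t := by
    have := (hasDerivAt_pow 2 t).const_mul (‖w‖ ^ 2)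
    exact this.congr_deriv (by push_cast; ring)
  exact h1.add h2

/-- descent lemma. -/
lemma my_descent (f : E → ℝ) (f' : E → E) (β : ℝ) (hβ : 0 ≤ β)
    (hf : ∀ x, HasGradientAt f (f' x) x)
    (hsmooth : ∀ u v, ‖f' u - f' v‖ ≤ β * ‖u - v‖) (x y : E) :
    f y ≤ f x + ⟪f' x, y - x⟫ + β / 2 * ‖y - x‖ ^ 2 := by
  set w := y - x with hw
  set c := ⟪f' x, w⟫ with hc
  set ψ : ℝ → ℝ := fun s => f (x + s • w) - c * s - β / 2 * ‖w‖ ^ 2 * s ^ 2 with hψ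
  have hd : ∀ t : ℝ, HasDerivAt ψ (⟪f' (x + t • w), w⟫ - c - β * ‖w‖ ^ 2 * t) t := by
    intro t
    have h1 := my_line_deriv f f' hf x w t
    have h2 : HasDerivAt (fun s : ℝ => c * s) c t := by
      simpa using (hasDerivAt_id t).const_mul c
    have h3 : HasDerivAt (fun s : ℝ => β / 2 * ‖w‖ ^ 2 * s ^ 2) (β * ‖w‖ ^ 2 * t) t := by
      have := (hasDerivAt_pow 2 t).const_mul (β / 2 * ‖w‖ ^ 2)
      exact this.congr_deriv (by push_cast; ring)
    exact (h1.sub h2).sub h3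
  have hanti : AntitoneOn ψ (Icc 0 1) := by
    apply antitoneOn_of_deriv_nonpos (convex_Icc 0 1)
    · exact fun t _ => ((hd t).continuousAt).continuousWithinAt
    · intro t ht
      exact ((hd t).differentiableAt).differentiableWithinAt
    · intro t ht
      rw [interior_Icc] at ht
      rw [(hd t).deriv]
      have hb : ⟪f' (x + t • w) - f' x, w⟫ ≤ β * ‖w‖ ^ 2 * t := by
        calc ⟪f' (x + t • w) - f' x, w⟫ ≤ ‖f' (x + t • w) - f' x‖ * ‖w‖ :=
              real_inner_le_norm _ _
          _ ≤ β * ‖x + t • w - x‖ * ‖w‖ := by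
              have := hsmooth (x + t • w) x
              nlinarith [norm_nonneg w]
          _ = β * ‖w‖ ^ 2 * t := by
              rw [add_sub_cancel_left, norm_smul]
              simp [abs_of_pos ht.1]
              ring
      have : ⟪f' (x + t • w), w⟫ - c = ⟪f' (x + t • w) - f' x, w⟫ := by
        rw [inner_sub_left]
      linarith
  have h01 : ψ 1 ≤ ψ 0 := hanti (by norm_num) (by norm_num) zero_le_one
  have e1 : ψ 1 = f y - c - β / 2 * ‖w‖ ^ 2 := by simp [hψ, hw]
  have e0 : ψ 0 = f x := by simp [hψ]
  rw [e1, e0] at h01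
  linarith



section Main
variable (f : E → ℝ) (f' : E → E) (μ β : ℝ)

/-- gradient inequality for `g = f - μ/2‖·‖²`. -/
lemma my_h1 (hgrad : ∀ u, HasGradientAt f (f' u) u)
    (hsc : ConvexOn ℝ Set.univ (fun u => f u - μ / 2 * ‖u‖ ^ 2)) (u v : E) :
    ⟪f' u - μ • u, v - u⟫ ≤ (f v - μ / 2 * ‖v‖ ^ 2) - (f u - μ / 2 * ‖u‖ ^ 2) := by
  have hd1 : HasDerivAt (fun s : ℝ => f (u + s • (v - u))) ⟪f' u, v - u⟫ 0 := by
    simpa using my_line_deriv f f' hgrad u (v - u) 0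
  have hd2 := (my_normsq_line u (v - u) 0).const_mul (μ / 2)
  have hd := hd1.sub hd2
  have := my_convex_line (fun u => f u - μ / 2 * ‖u‖ ^ 2) hsc u v _ hd
  have e : ⟪f' u - μ • u, v - u⟫
      = ⟪f' u, v - u⟫ - μ / 2 * (2 * ⟪u, v - u⟫ + 2 * ‖v - u‖ ^ 2 * 0) := by
    rw [inner_sub_left, real_inner_smul_left]; ring
  rw [e]
  exact this

/-- descent lemma for `g = f - μ/2‖·‖²` with constant `β - μ`. -/
lemma my_h2 (hμβ : μ ≤ β) (hβ : 0 ≤ β)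
    (hgrad : ∀ u, HasGradientAt f (f' u) u)
    (hsmooth : ∀ u v, ‖f' u - f' v‖ ≤ β * ‖u - v‖) (x y : E) :
    (f y - μ / 2 * ‖y‖ ^ 2) ≤ (f x - μ / 2 * ‖x‖ ^ 2) + ⟪f' x - μ • x, y - x⟫
      + (β - μ) / 2 * ‖y - x‖ ^ 2 := by
  have hd := my_descent f f' β hβ hgrad hsmooth x y
  have hny : ‖y‖ ^ 2 = ‖x‖ ^ 2 + 2 * ⟪x, y - x⟫ + ‖y - x‖ ^ 2 := by
    have := norm_add_sq_real x (y - x)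
    simpa using this
  have hinner : ⟪f' x - μ • x, y - x⟫ = ⟪f' x, y - x⟫ - μ * ⟪x, y - x⟫ := by
    rw [inner_sub_left, real_inner_smul_left]
  rw [hinner, hny]
  linarith

/-- one-sided cocoercivity estimate for `g`. -/
lemma my_key (hμβ : μ < β) (hμ : 0 < μ)
    (hgrad : ∀ u, HasGradientAt f (f' u) u)
    (hsc : ConvexOn ℝ Set.univ (fun u => f u - μ / 2 * ‖u‖ ^ 2))
    (hsmooth : ∀ u v, ‖f' u - f' v‖ ≤ β * ‖u - v‖) (u v : E) :
    (f v - μ / 2 * ‖v‖ ^ 2) + ⟪f' v - μ • v, u - v⟫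
      + 1 / (2 * (β - μ)) * ‖(f' u - μ • u) - (f' v - μ • v)‖ ^ 2
      ≤ (f u - μ / 2 * ‖u‖ ^ 2) := by
  set L : ℝ := β - μ with hLdef
  have hL : 0 < L := by simp [hLdef]; linarith
  set d : E := (f' u - μ • u) - (f' v - μ • v) with hd
  set z : E := u - (1 / L) • d with hz
  have a1 := my_h2 f f' μ β hμβ.le (by linarith) hgrad hsmooth u z
  have a2 := my_h1 f f' μ hgrad hsc v z
  have e1 : z - u = -((1 / L) • d) := by rw [hz]; abel
  have e2 : z - v = (u - v) - (1 / L) • d := by rw [hz]; abel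
  have i1 : ⟪f' u - μ • u, z - u⟫ = -((1 / L) * ⟪f' u - μ • u, d⟫) := by
    rw [e1, inner_neg_right, real_inner_smul_right]
  have n1 : ‖z - u‖ ^ 2 = (1 / L) ^ 2 * ‖d‖ ^ 2 := by
    rw [e1, norm_neg, norm_smul, Real.norm_eq_abs, mul_pow, sq_abs]
  have i2 : ⟪f' v - μ • v, z - v⟫ = ⟪f' v - μ • v, u - v⟫ - (1 / L) * ⟪f' v - μ • v, d⟫ := by
    rw [e2, inner_sub_right, real_inner_smul_right]
  have e3 : ⟪f' u - μ • u, d⟫ - ⟪f' v - μ • v, d⟫ = ‖d‖ ^ 2 := by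
    rw [← inner_sub_left, ← hd, real_inner_self_eq_norm_sq]
  have e4 : (1 / L) * ⟪f' u - μ • u, d⟫ - (1 / L) * ⟪f' v - μ • v, d⟫
      = (1 / L) * ‖d‖ ^ 2 := by rw [← mul_sub, e3]
  have f1 : L / 2 * ((1 / L) ^ 2 * ‖d‖ ^ 2) = 1 / (2 * L) * ‖d‖ ^ 2 := by
    field_simp
  have f2 : 1 / (2 * L) * ‖d‖ ^ 2 + 1 / (2 * L) * ‖d‖ ^ 2 = (1 / L) * ‖d‖ ^ 2 := by
    field_simp; ring
  rw [i1, n1] at a1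
  rw [i2] at a2
  linarith

/-- coercivity: `‖f'u - f'v‖² + μβ‖u-v‖² ≤ (β+μ)⟪f'u - f'v, u-v⟫`. -/
lemma my_h4 (hμβ : μ < β) (hμ : 0 < μ)
    (hgrad : ∀ u, HasGradientAt f (f' u) u)
    (hsc : ConvexOn ℝ Set.univ (fun u => f u - μ / 2 * ‖u‖ ^ 2))
    (hsmooth : ∀ u v, ‖f' u - f' v‖ ≤ β * ‖u - v‖) (u v : E) :
    ‖f' u - f' v‖ ^ 2 + μ * β * ‖u - v‖ ^ 2 ≤ (β + μ) * ⟪f' u - f' v, u - v⟫ := by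
  have hL : (0:ℝ) < β - μ := by linarith
  have k1 := my_key f f' μ β hμβ hμ hgrad hsc hsmooth u v
  have k2 := my_key f f' μ β hμβ hμ hgrad hsc hsmooth v u
  set gu : E := f' u - μ • u
  set gv : E := f' v - μ • v
  -- step 1: cocoercivity of g
  have hrev : ‖gv - gu‖ = ‖gu - gv‖ := norm_sub_rev _ _
  have evu : v - u = -(u - v) := by abel
  have ineg : ⟪gu, v - u⟫ = -⟪gu, u - v⟫ := by rw [evu, inner_neg_right]
  have esub : ⟪gu, u - v⟫ - ⟪gv, u - v⟫ = ⟪gu - gv, u - v⟫ := by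
    rw [← inner_sub_left]
  have f2 : 1 / (2 * (β - μ)) * ‖gu - gv‖ ^ 2 + 1 / (2 * (β - μ)) * ‖gu - gv‖ ^ 2
      = (1 / (β - μ)) * ‖gu - gv‖ ^ 2 := by field_simp; ring
  rw [hrev] at k2
  rw [ineg] at k2
  have h5 : (1 / (β - μ)) * ‖gu - gv‖ ^ 2 ≤ ⟪gu - gv, u - v⟫ := by linarith
  have h3 : ‖gu - gv‖ ^ 2 ≤ (β - μ) * ⟪gu - gv, u - v⟫ := by
    have := mul_le_mul_of_nonneg_left h5 hL.le
    calc ‖gu - gv‖ ^ 2 = (β - μ) * ((1 / (β - μ)) * ‖gu - gv‖ ^ 2) := by field_simp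
      _ ≤ (β - μ) * ⟪gu - gv, u - v⟫ := this
  -- step 2: expand
  have ed : gu - gv = (f' u - f' v) - μ • (u - v) := by
    simp only [gu, gv, smul_sub]; abel
  have en : ‖gu - gv‖ ^ 2 = ‖f' u - f' v‖ ^ 2 - 2 * (μ * ⟪f' u - f' v, u - v⟫)
      + μ ^ 2 * ‖u - v‖ ^ 2 := by
    rw [ed, norm_sub_sq_real, real_inner_smul_right, norm_smul, Real.norm_eq_abs,
      mul_pow, sq_abs]
  have ei : ⟪gu - gv, u - v⟫ = ⟪f' u - f' v, u - v⟫ - μ * ‖u - v‖ ^ 2 := by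
    rw [ed, inner_sub_left, real_inner_smul_left, real_inner_self_eq_norm_sq]
  rw [en, ei] at h3
  nlinarith [h3]

end Main

/-- If `f` is `μ`-strongly convex and `β`-smooth with `μ < β`, then
`R u = u - (2/(β+μ)) • f' u` is `((β-μ)/(β+μ))`-contractive. -/
theorem strongly_convex_smooth_gradient_contractive
    {p : ℕ} (f : EuclideanSpace ℝ (Fin p) → ℝ) (f' : EuclideanSpace ℝ (Fin p) → EuclideanSpace ℝ (Fin p))
    (μ β : ℝ) (hμ : 0 < μ) (hμβ : μ < β)
    (hgrad : ∀ u, HasGradientAt f (f' u) u)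
    (hsc : ConvexOn ℝ Set.univ (fun u => f u - μ / 2 * ‖u‖ ^ 2))
    (hsmooth : ∀ u v, ‖f' u - f' v‖ ≤ β * ‖u - v‖) :
    (β - μ) / (β + μ) < 1 ∧
    ∀ u v, ‖(u - (2 / (β + μ)) • f' u) - (v - (2 / (β + μ)) • f' v)‖
      ≤ (β - μ) / (β + μ) * ‖u - v‖ := by
  have hS : (0:ℝ) < β + μ := by linarith
  constructor
  · rw [div_lt_one hS]; linarith
  intro u v
  have h4 := my_h4 f f' μ β hμβ hμ hgrad hsc hsmooth u v
  set W := u - v with hW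
  set D := f' u - f' v with hD
  set c : ℝ := 2 / (β + μ) with hc
  set τ : ℝ := (β - μ) / (β + μ) with hτ
  have hrw : (u - c • f' u) - (v - c • f' v) = W - c • D := by
    rw [hW, hD, smul_sub]; abel
  rw [hrw]
  have hexp : ‖W - c • D‖ ^ 2 = ‖W‖ ^ 2 - 2 * (c * ⟪D, W⟫) + c ^ 2 * ‖D‖ ^ 2 := by
    rw [norm_sub_sq_real, real_inner_smul_right, norm_smul, Real.norm_eq_abs, mul_pow,
      sq_abs, real_inner_comm]
  have h4' : ‖D‖ ^ 2 + μ * β * ‖W‖ ^ 2 ≤ (β + μ) * ⟪D, W⟫ := h4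
  have key2 : (β + μ) ^ 2 * (‖W‖ ^ 2 - 2 * (c * ⟪D, W⟫) + c ^ 2 * ‖D‖ ^ 2)
      ≤ (β + μ) ^ 2 * ((τ * ‖W‖) ^ 2) := by
    have e1 : (β + μ) ^ 2 * (‖W‖ ^ 2 - 2 * (c * ⟪D, W⟫) + c ^ 2 * ‖D‖ ^ 2)
        = (β + μ) ^ 2 * ‖W‖ ^ 2 - 4 * ((β + μ) * ⟪D, W⟫) + 4 * ‖D‖ ^ 2 := by
      rw [hc]; field_simp; ring
    have e2 : (β + μ) ^ 2 * ((τ * ‖W‖) ^ 2) = (β - μ) ^ 2 * ‖W‖ ^ 2 := by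
      rw [hτ]; field_simp
    rw [e1, e2]
    nlinarith [h4']
  have hsq : ‖W - c • D‖ ^ 2 ≤ (τ * ‖W‖) ^ 2 := by
    rw [hexp]
    exact le_of_mul_le_mul_left key2 (by positivity)
  have hτnn : 0 ≤ τ * ‖W‖ := by
    have h0 : 0 ≤ τ := by
      rw [hτ]
      apply div_nonneg <;> linarith
    exact mul_nonneg h0 (norm_nonneg _)
  calc ‖W - c • D‖ = Real.sqrt (‖W - c • D‖ ^ 2) := (Real.sqrt_sq (norm_nonneg _)).symm
    _ ≤ Real.sqrt ((τ * ‖W‖) ^ 2) := Real.sqrt_le_sqrt hsq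
    _ = τ * ‖W‖ := Real.sqrt_sq hτnn
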